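/- arXiv:0808.2173 — 3 statements merged into one kernel-verified Lean document; each statement's English description precedes it below -/
import Mathlib

section
/- For every natural number N there exists a finite connected bichromatic graph Γ that is locally like W(B_4) and has more than N vertices; in particular, there exist infinitely many pairwise non-isomorphic finite connected bichromatic graphs that are locally like W(B_4). -/
def WB (n : ℕ) : SimpleGraph (Fin n × Fin n) where
  Adj p q :=
    p ≠ q ∧ (({p.1, p.2} : Set (Fin n)) ∩ {q.1, q.2} = ∅ ∨ (q.1 = p.2 ∧ q.2 = p.1))
  symm := by
    constructor
    rintro ⟨a, b⟩ ⟨c, d⟩ ⟨hne, h⟩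
    refine ⟨hne.symm, ?_⟩
    rcases h with h | ⟨h1, h2⟩
    · left; rw [Set.inter_comm] at h; exact h
    · right; exact ⟨h2.symm, h1.symm⟩
  loopless := by constructor; rintro ⟨a, b⟩ ⟨hne, _⟩; exact hne rfl

def WBcolor (n : ℕ) (p : Fin n × Fin n) : Bool := decide (p.1 = p.2)

def BIso {V : Type*} {W : Type*} (G : SimpleGraph V) (cG : V → Bool)
    (H : SimpleGraph W) (cH : W → Bool) : Prop :=
  ∃ e : G ≃g H, ∀ v : V, cH (e v) = cG v

/-- The vertex `y_{1,1}` of `WB n`, a short vertex. -/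
def shortWBvertex (n : ℕ) (hn : 2 ≤ n) : Fin n × Fin n := (⟨0, by omega⟩, ⟨0, by omega⟩)

/-- The vertex `y_{1,2}` of `WB n`, a long vertex. -/
def longWBvertex (n : ℕ) (hn : 2 ≤ n) : Fin n × Fin n := (⟨0, by omega⟩, ⟨1, by omega⟩)

/-- A bichromatic graph is locally like `W(Bₙ)` if the local graph at every short vertex is
isomorphic (as a bichromatic graph) to the local graph of `W(Bₙ)` at `y_{1,1}` and the local
graph at every long vertex is isomorphic to the local graph of `W(Bₙ)` at `y_{1,2}`. -/
def LocallyLikeWBn {V : Type*} (G : SimpleGraph V) (c : V → Bool) (n : ℕ) (hn : 2 ≤ n) : Prop :=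
  ∀ v : V,
    (c v = true → BIso (G.induce (G.neighborSet v)) (fun x => c x.1)
      ((WB n).induce ((WB n).neighborSet (shortWBvertex n hn))) (fun x => WBcolor n x.1)) ∧
    (c v = false → BIso (G.induce (G.neighborSet v)) (fun x => c x.1)
      ((WB n).induce ((WB n).neighborSet (longWBvertex n hn))) (fun x => WBcolor n x.1))

lemma wb_adj_iff (p q : Fin 4 × Fin 4) :
    (WB 4).Adj p q ↔ p ≠ q ∧ ((p.1 ≠ q.1 ∧ p.1 ≠ q.2 ∧ p.2 ≠ q.1 ∧ p.2 ≠ q.2) ∨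
      (q.1 = p.2 ∧ q.2 = p.1)) := by
  have h : ({p.1, p.2} : Set (Fin 4)) ∩ {q.1, q.2} = ∅ ↔
      (p.1 ≠ q.1 ∧ p.1 ≠ q.2 ∧ p.2 ≠ q.1 ∧ p.2 ≠ q.2) := by
    constructor
    · intro h
      simp only [Set.eq_empty_iff_forall_notMem, Set.mem_inter_iff, Set.mem_insert_iff,
        Set.mem_singleton_iff] at h
      exact ⟨fun e => h p.1 ⟨Or.inl rfl, Or.inl e⟩, fun e => h p.1 ⟨Or.inl rfl, Or.inr e⟩,
        fun e => h p.2 ⟨Or.inr rfl, Or.inl e⟩, fun e => h p.2 ⟨Or.inr rfl, Or.inr e⟩⟩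
    · rintro ⟨h1, h2, h3, h4⟩
      simp only [Set.eq_empty_iff_forall_notMem, Set.mem_inter_iff, Set.mem_insert_iff,
        Set.mem_singleton_iff]
      rintro x ⟨ha | ha, hb | hb⟩ <;> subst ha <;> simp_all
  exact and_congr Iff.rfl (or_congr h Iff.rfl)

instance wbAdjDec : DecidableRel (WB 4).Adj :=
  fun p q => decidable_of_iff' _ (wb_adj_iff p q)

/-- The explicit voltage function on `W(B₄)`. -/
def fv (p q : Fin 4 × Fin 4) : ℤ :=
  (if (p = (0,1) ∨ p = (1,0)) ∧ (q = (2,3) ∨ q = (3,2)) then 1 else 0) -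
  (if (q = (0,1) ∨ q = (1,0)) ∧ (p = (2,3) ∨ p = (3,2)) then 1 else 0)

lemma fv_anti (p q : Fin 4 × Fin 4) : fv q p = - fv p q := by unfold fv; ring

lemma fv_triangle : ∀ p q r : Fin 4 × Fin 4, (WB 4).Adj p q → (WB 4).Adj q r →
    (WB 4).Adj p r → fv p r = fv p q + fv q r := by decide

/-- The `ℤ/m`-cover of `W(B₄)` twisted by the voltage `fv`. -/
def Gm (m : ℕ) : SimpleGraph ((Fin 4 × Fin 4) × ZMod m) where
  Adj p q := (WB 4).Adj p.1 q.1 ∧ q.2 = p.2 + (fv p.1 q.1 : ZMod m)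
  symm := by
    constructor
    rintro ⟨v, a⟩ ⟨w, b⟩ ⟨h, hb⟩
    refine ⟨h.symm, ?_⟩
    rw [hb, fv_anti]
    push_cast
    ring
  loopless := by constructor; rintro ⟨v, a⟩ ⟨h, _⟩; exact (WB 4).loopless.irrefl v h

def cGm (m : ℕ) (p : (Fin 4 × Fin 4) × ZMod m) : Bool := WBcolor 4 p.1

lemma BIso.symm' {V W : Type*} {G : SimpleGraph V} {H : SimpleGraph W} {cG cH}
    (h : BIso G cG H cH) : BIso H cH G cG := by
  obtain ⟨e, he⟩ := h
  exact ⟨e.symm, fun w => by simpa using (he (e.symm w)).symm⟩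

lemma BIso.trans' {U V W : Type*} {G : SimpleGraph U} {H : SimpleGraph V} {K : SimpleGraph W}
    {cG cH cK} (h1 : BIso G cG H cH) (h2 : BIso H cH K cK) : BIso G cG K cK := by
  obtain ⟨e, he⟩ := h1
  obtain ⟨f, hf⟩ := h2
  exact ⟨e.trans f, fun v => by simpa using (hf (e v)).trans (he v)⟩

lemma biso_neighbor {V W : Type*} {G : SimpleGraph V} {H : SimpleGraph W} {cG : V → Bool}
    {cH : W → Bool} (e : G ≃g H) (hc : ∀ x, cH (e x) = cG x) (v : V) :
    BIso (G.induce (G.neighborSet v)) (fun x => cG x.1)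
      (H.induce (H.neighborSet (e v))) (fun x => cH x.1) := by
  refine ⟨⟨Equiv.subtypeEquiv e.toEquiv fun w => ?_, fun {a b} => ?_⟩, fun x => ?_⟩
  · simp only [SimpleGraph.mem_neighborSet, RelIso.coe_fn_toEquiv]
    exact (SimpleGraph.Iso.map_adj_iff e).symm
  · simpa using SimpleGraph.Iso.map_adj_iff e
  · exact hc x.1

/-- The automorphism of `W(B₄)` induced by a permutation of the index set. -/
def permIso (σ : Equiv.Perm (Fin 4)) : WB 4 ≃g WB 4 where
  toEquiv := Equiv.prodCongr σ σ
  map_rel_iff' := by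
    intro p q
    rw [wb_adj_iff, wb_adj_iff]
    simp [Prod.ext_iff, Equiv.prodCongr_apply, Ne, EmbeddingLike.apply_eq_iff_eq]

lemma permIso_color (σ : Equiv.Perm (Fin 4)) (p : Fin 4 × Fin 4) :
    WBcolor 4 (permIso σ p) = WBcolor 4 p := by
  have h : permIso σ p = (σ p.1, σ p.2) := rfl
  rw [h, WBcolor, WBcolor, decide_eq_decide]
  exact ⟨fun h => σ.injective h, fun h => congrArg σ h⟩

lemma exists_perm_short (v : Fin 4 × Fin 4) (h : v.1 = v.2) :
    ∃ σ : Equiv.Perm (Fin 4), permIso σ (shortWBvertex 4 (by decide)) = v := by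
  refine ⟨Equiv.swap 0 v.1, ?_⟩
  have h0 : (shortWBvertex 4 (by decide) : Fin 4 × Fin 4) = (0, 0) := rfl
  have : permIso (Equiv.swap 0 v.1) (0, 0) = (Equiv.swap 0 v.1 0, Equiv.swap 0 v.1 0) := rfl
  rw [h0, this, Equiv.swap_apply_left]
  exact Prod.ext rfl h

lemma exists_perm_long (v : Fin 4 × Fin 4) (h : v.1 ≠ v.2) :
    ∃ σ : Equiv.Perm (Fin 4), permIso σ (longWBvertex 4 (by decide)) = v := by
  set b' : Fin 4 := Equiv.swap 0 v.1 v.2 with hb'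
  have hb0 : b' ≠ 0 := by
    intro h0
    apply h
    have : Equiv.swap 0 v.1 b' = Equiv.swap 0 v.1 0 := by rw [h0]
    rw [hb', Equiv.swap_apply_self, Equiv.swap_apply_left] at this
    exact this.symm
  refine ⟨(Equiv.swap 1 b').trans (Equiv.swap 0 v.1), ?_⟩
  have h1 : (longWBvertex 4 (by decide) : Fin 4 × Fin 4) = (0, 1) := rfl
  have h2 : permIso ((Equiv.swap 1 b').trans (Equiv.swap 0 v.1)) (0, 1) =
      (Equiv.swap 0 v.1 (Equiv.swap 1 b' 0), Equiv.swap 0 v.1 (Equiv.swap 1 b' 1)) := rfl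
  rw [h1, h2, Equiv.swap_apply_left,
    Equiv.swap_apply_of_ne_of_ne (by decide : (0 : Fin 4) ≠ 1) (Ne.symm hb0),
    Equiv.swap_apply_left, hb', Equiv.swap_apply_self]

lemma wb_nbhd_biso (φ : WB 4 ≃g WB 4) (hφ : ∀ p, WBcolor 4 (φ p) = WBcolor 4 p)
    (b v : Fin 4 × Fin 4) (h : φ b = v) :
    BIso ((WB 4).induce ((WB 4).neighborSet v)) (fun x => WBcolor 4 x.1)
      ((WB 4).induce ((WB 4).neighborSet b)) (fun x => WBcolor 4 x.1) := by
  subst h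
  exact (biso_neighbor φ hφ b).symm'

lemma Gm_nbhd_biso (m : ℕ) (v : Fin 4 × Fin 4) (a : ZMod m) :
    BIso ((Gm m).induce ((Gm m).neighborSet (v, a))) (fun x => cGm m x.1)
      ((WB 4).induce ((WB 4).neighborSet v)) (fun x => WBcolor 4 x.1) := by
  refine ⟨⟨⟨fun x => ⟨x.1.1, x.2.1⟩, fun y => ⟨(y.1, a + (fv v y.1 : ZMod m)), y.2, rfl⟩,
    ?_, ?_⟩, fun {x y} => ?_⟩, fun x => rfl⟩
  · rintro ⟨⟨w, b⟩, hw⟩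
    exact Subtype.ext (Prod.ext rfl hw.2.symm)
  · intro y
    exact Subtype.ext rfl
  · constructor
    · intro hadj
      have hx := x.2
      have hy := y.2
      refine ⟨hadj, ?_⟩
      have ht : fv v y.1.1 = fv v x.1.1 + fv x.1.1 y.1.1 :=
        fv_triangle v x.1.1 y.1.1 hx.1 hadj hy.1
      simp only [Function.Embedding.coe_subtype]
      rw [hy.2, hx.2, ht]
      push_cast
      ring
    · exact fun h => h.1

lemma Gm_locally (m : ℕ) : LocallyLikeWBn (Gm m) (cGm m) 4 (by decide) := by
  rintro ⟨v, a⟩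
  constructor
  · intro h
    have hv : v.1 = v.2 := by simpa [cGm, WBcolor] using h
    obtain ⟨σ, hσ⟩ := exists_perm_short v hv
    exact (Gm_nbhd_biso m v a).trans' (wb_nbhd_biso (permIso σ) (permIso_color σ) _ v hσ)
  · intro h
    have hv : v.1 ≠ v.2 := by simpa [cGm, WBcolor] using h
    obtain ⟨σ, hσ⟩ := exists_perm_long v hv
    exact (Gm_nbhd_biso m v a).trans' (wb_nbhd_biso (permIso σ) (permIso_color σ) _ v hσ)

lemma stepTo (m : ℕ) (v w : Fin 4 × Fin 4) (h : (WB 4).Adj v w) (a b : ZMod m)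
    (hb : b = a + (fv v w : ZMod m)) : (Gm m).Reachable (v, a) (w, b) :=
  SimpleGraph.Adj.reachable ⟨h, hb⟩

lemma reach_base (m : ℕ) : ∀ (v : Fin 4 × Fin 4) (a : ZMod m),
    ∃ b, (Gm m).Reachable (v, a) (((0, 0) : Fin 4 × Fin 4), b) := by
  intro v a
  fin_cases v
  all_goals first
    | exact ⟨a, SimpleGraph.Reachable.refl _⟩
    | exact ⟨_, stepTo m _ (0, 0) (by decide) a _ rfl⟩
    | exact ⟨_, (stepTo m _ (2, 2) (by decide) a _ rfl).trans
        (stepTo m (2, 2) (0, 0) (by decide) _ _ rfl)⟩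
    | exact ⟨_, (stepTo m _ (1, 3) (by decide) a _ rfl).trans
        (stepTo m (1, 3) (0, 0) (by decide) _ _ rfl)⟩

lemma loop (m : ℕ) (a : ZMod m) :
    (Gm m).Reachable (((0, 0) : Fin 4 × Fin 4), a) ((0, 0), a + 1) := by
  refine (stepTo m (0, 0) (2, 2) (by decide) a a ?_).trans
    ((stepTo m (2, 2) (0, 1) (by decide) a a ?_).trans
      ((stepTo m (0, 1) (2, 3) (by decide) a (a + 1) ?_).trans
        (stepTo m (2, 3) (0, 0) (by decide) (a + 1) (a + 1) ?_)))
  · rw [show fv (0, 0) (2, 2) = 0 from by decide]; push_cast; ring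
  · rw [show fv (2, 2) (0, 1) = 0 from by decide]; push_cast; ring
  · rw [show fv (0, 1) (2, 3) = 1 from by decide]; push_cast; ring
  · rw [show fv (2, 3) (0, 0) = 0 from by decide]; push_cast; ring

lemma reach_zero (m : ℕ) [NeZero m] (b : ZMod m) :
    (Gm m).Reachable (((0, 0) : Fin 4 × Fin 4), b) ((0, 0), 0) := by
  have key : ∀ k : ℕ, (Gm m).Reachable (((0, 0) : Fin 4 × Fin 4), (k : ZMod m)) ((0, 0), 0) := by
    intro k
    induction k with
    | zero => rw [Nat.cast_zero]
    | succ n ih =>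
      have h1 : ((n + 1 : ℕ) : ZMod m) = (n : ZMod m) + 1 := by push_cast; ring
      rw [h1]
      exact (loop m (n : ZMod m)).symm.trans ih
  have hb : ((b.val : ℕ) : ZMod m) = b := ZMod.natCast_rightInverse b
  rw [← hb]
  exact key b.val

lemma Gm_connected (m : ℕ) [NeZero m] : (Gm m).Connected := by
  rw [SimpleGraph.connected_iff]
  refine ⟨fun x y => ?_, ⟨((0, 0), 0)⟩⟩
  obtain ⟨x1, x2⟩ := x
  obtain ⟨y1, y2⟩ := y
  obtain ⟨b, hb⟩ := reach_base m x1 x2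
  obtain ⟨c, hc⟩ := reach_base m y1 y2
  exact (hb.trans (reach_zero m b)).trans ((hc.trans (reach_zero m c)).symm)

lemma Gm_card (m : ℕ) [NeZero m] : Nat.card ((Fin 4 × Fin 4) × ZMod m) = 16 * m := by
  simp [Nat.card_eq_fintype_card, ZMod.card]

lemma biso_card {V W : Type*} {G : SimpleGraph V} {H : SimpleGraph W} {cG cH}
    (h : BIso G cG H cH) : Nat.card V = Nat.card W := by
  obtain ⟨e, -⟩ := h
  exact Nat.card_congr e.toEquiv


theorem infinitely_many_locally_WB4 :
    (∀ N : ℕ, ∃ (V : Type) (G : SimpleGraph V) (c : V → Bool),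
      Finite V ∧ G.Connected ∧ LocallyLikeWBn G c 4 (by omega) ∧ N < Nat.card V) ∧
    ∃ (V : ℕ → Type) (G : ∀ i, SimpleGraph (V i)) (c : ∀ i, V i → Bool),
      (∀ i, Finite (V i) ∧ (G i).Connected ∧ LocallyLikeWBn (G i) (c i) 4 (by omega)) ∧
      ∀ i j, i ≠ j → ¬ BIso (G i) (c i) (G j) (c j) := by
  constructor
  · intro N
    refine ⟨(Fin 4 × Fin 4) × ZMod (N + 1), Gm (N + 1), cGm (N + 1), inferInstance,
      Gm_connected (N + 1), Gm_locally (N + 1), ?_⟩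
    rw [Gm_card]
    omega
  · refine ⟨fun i => (Fin 4 × Fin 4) × ZMod (i + 1), fun i => Gm (i + 1), fun i => cGm (i + 1),
      fun i => ⟨inferInstance, Gm_connected (i + 1), Gm_locally (i + 1)⟩, ?_⟩
    intro i j hij h
    have hc := biso_card h
    rw [Gm_card, Gm_card] at hc
    omega
end

section
/- Let Γ be a finite nonempty bichromatic graph that is locally like W(F4). Then the number of short vertices of Γ equals the number of long vertices, the total number of vertices of Γ is divisible by 8, and Γ has at least 24 vertices. -/
/-- The coloring of `W(Cₙ)`: obtained from `W(Bₙ)` by exchanging short and long vertices. -/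
def WCcolor (n : ℕ) (p : Fin n × Fin n) : Bool := !(WBcolor n p)

/-- A bichromatic graph is locally like `W(F₄)` if the local graph at every short vertex
is isomorphic to `W(B₃)` and the local graph at every long vertex is isomorphic to `W(C₃)`. -/
def LocallyLikeWF4 {V : Type*} (G : SimpleGraph V) (c : V → Bool) : Prop :=
  ∀ v : V,
    (c v = true → BIso (G.induce (G.neighborSet v)) (fun x => c x.1) (WB 3) (WBcolor 3)) ∧
    (c v = false → BIso (G.induce (G.neighborSet v)) (fun x => c x.1) (WB 3) (WCcolor 3))

lemma WB_adj_iff {n : ℕ} (p q : Fin n × Fin n) : (WB n).Adj p q ↔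
    p ≠ q ∧ ((p.1 ≠ q.1 ∧ p.1 ≠ q.2 ∧ p.2 ≠ q.1 ∧ p.2 ≠ q.2) ∨ (q.1 = p.2 ∧ q.2 = p.1)) := by
  show (p ≠ q ∧ _) ↔ _
  rw [and_congr_right_iff]
  intro _
  refine or_congr_left ?_
  rw [Set.eq_empty_iff_forall_notMem]
  constructor
  · intro h
    refine ⟨fun e => h p.1 ⟨by simp, by simp [e]⟩, fun e => h p.1 ⟨by simp, by simp [e]⟩,
      fun e => h p.2 ⟨by simp, by simp [e]⟩, fun e => h p.2 ⟨by simp, by simp [e]⟩⟩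
  · rintro ⟨h1, h2, h3, h4⟩ x ⟨hx1, hx2⟩
    simp only [Set.mem_insert_iff, Set.mem_singleton_iff] at hx1 hx2
    rcases hx1 with rfl | rfl <;> rcases hx2 with e | e <;> [exact h1 e; exact h2 e; exact h3 e; exact h4 e]

instance {n : ℕ} : DecidableRel (WB n).Adj := fun p q =>
  decidable_of_iff' _ (WB_adj_iff p q)

lemma WB3_diag_adj : ∀ p q : Fin 3 × Fin 3, WBcolor 3 p = true → WBcolor 3 q = true →
    p ≠ q → (WB 3).Adj p q := by decide

lemma WB3_offdiag_tf : ∀ p q r : Fin 3 × Fin 3, WBcolor 3 p = false → WBcolor 3 q = false →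
    WBcolor 3 r = false → (WB 3).Adj p q → (WB 3).Adj p r → (WB 3).Adj q r → False := by decide

lemma WBcolor_card_true : Nat.card {p : Fin 3 × Fin 3 // WBcolor 3 p = true} = 3 := by
  rw [Nat.card_eq_fintype_card]; decide

lemma WBcolor_card_false : Nat.card {p : Fin 3 × Fin 3 // WBcolor 3 p = false} = 6 := by
  rw [Nat.card_eq_fintype_card]; decide

lemma WCcolor_card_true : Nat.card {p : Fin 3 × Fin 3 // WCcolor 3 p = true} = 6 := by
  rw [Nat.card_eq_fintype_card]; decide

lemma BIso.card_color {V W : Type*} {G : SimpleGraph V} {cG : V → Bool}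
    {H : SimpleGraph W} {cH : W → Bool} (h : BIso G cG H cH) (b : Bool) :
    Nat.card {v : V // cG v = b} = Nat.card {w : W // cH w = b} := by
  obtain ⟨e, he⟩ := h
  exact Nat.card_congr (e.toEquiv.subtypeEquiv (fun v => by
    show cG v = b ↔ cH (e v) = b
    rw [he v]))

lemma nbr_card_aux {V : Type} (G : SimpleGraph V) (c : V → Bool) (v : V)
    {col : Fin 3 × Fin 3 → Bool}
    (h : BIso (G.induce (G.neighborSet v)) (fun x => c x.1) (WB 3) col) (b : Bool) :
    Nat.card {w : V // G.Adj v w ∧ c w = b} = Nat.card {p : Fin 3 × Fin 3 // col p = b} := by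
  rw [← h.card_color b]
  exact Nat.card_congr
    (Equiv.subtypeSubtypeEquivSubtypeInter (fun w => w ∈ G.neighborSet v) (fun w => c w = b)).symm

lemma induce_adj_of_iso {V : Type} {G : SimpleGraph V} {s : Set V} {H : SimpleGraph (Fin 3 × Fin 3)}
    (e : G.induce s ≃g H) {x y : s} (h : H.Adj (e x) (e y)) : G.Adj x.1 y.1 := by
  have := e.map_adj_iff.mp h
  simpa using this

lemma short_nbrs_adj {V : Type} {G : SimpleGraph V} {c : V → Bool}
    (hloc : LocallyLikeWF4 G c) {v x y : V} (hv : c v = true)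
    (hx : G.Adj v x) (hy : G.Adj v y) (hcx : c x = true) (hcy : c y = true) (hxy : x ≠ y) :
    G.Adj x y := by
  obtain ⟨e, he⟩ := (hloc v).1 hv
  have hX : x ∈ G.neighborSet v := hx
  have hY : y ∈ G.neighborSet v := hy
  set X : G.neighborSet v := ⟨x, hX⟩
  set Y : G.neighborSet v := ⟨y, hY⟩
  have hne : e X ≠ e Y := fun h =>
    hxy (congrArg Subtype.val (e.toEquiv.injective h))
  have hadj : (WB 3).Adj (e X) (e Y) :=
    WB3_diag_adj _ _ (by rw [he]; exact hcx) (by rw [he]; exact hcy) hne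
  exact induce_adj_of_iso e hadj

lemma long_nbrs_tf {V : Type} {G : SimpleGraph V} {c : V → Bool}
    (hloc : LocallyLikeWF4 G c) {w x y z : V} (hw : c w = false)
    (hx : G.Adj w x) (hy : G.Adj w y) (hz : G.Adj w z)
    (hcx : c x = true) (hcy : c y = true) (hcz : c z = true)
    (hxy : G.Adj x y) (hxz : G.Adj x z) (hyz : G.Adj y z) : False := by
  obtain ⟨e, he⟩ := (hloc w).2 hw
  have hX : x ∈ G.neighborSet w := hx
  have hY : y ∈ G.neighborSet w := hy
  have hZ : z ∈ G.neighborSet w := hz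
  set X : G.neighborSet w := ⟨x, hX⟩
  set Y : G.neighborSet w := ⟨y, hY⟩
  set Z : G.neighborSet w := ⟨z, hZ⟩
  have hcol : ∀ (A : G.neighborSet w), c A.1 = true → WBcolor 3 (e A) = false := by
    intro A hA
    have h2 := he A
    simp only at h2
    rw [hA] at h2
    simpa [WCcolor] using h2
  have hXY : (WB 3).Adj (e X) (e Y) := by
    rw [e.map_adj_iff]; simpa using hxy
  have hXZ : (WB 3).Adj (e X) (e Z) := by
    rw [e.map_adj_iff]; simpa using hxz
  have hYZ : (WB 3).Adj (e Y) (e Z) := by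
    rw [e.map_adj_iff]; simpa using hyz
  exact WB3_offdiag_tf _ _ _ (hcol X hcx) (hcol Y hcy) (hcol Z hcz) hXY hXZ hYZ

theorem card_facts_of_locally_WF4 {V : Type} (G : SimpleGraph V) (c : V → Bool)
    (hfin : Finite V) (hne : Nonempty V) (hloc : LocallyLikeWF4 G c) :
    Nat.card {v : V // c v = true} = Nat.card {v : V // c v = false} ∧
    8 ∣ Nat.card V ∧ 24 ≤ Nat.card V := by
  classical
  have : Fintype V := Fintype.ofFinite V
  -- neighbor count Finsets
  set N : Bool → V → Finset V := fun b v => Finset.univ.filter (fun w => G.Adj v w ∧ c w = b)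
    with hN
  have hNcard : ∀ (b : Bool) (v : V), (N b v).card = Nat.card {w : V // G.Adj v w ∧ c w = b} := by
    intro b v
    rw [Nat.card_eq_fintype_card, Fintype.card_subtype]
  have hshortN : ∀ v, c v = true → (N true v).card = 3 ∧ (N false v).card = 6 := by
    intro v hv
    have h := (hloc v).1 hv
    constructor
    · rw [hNcard, nbr_card_aux G c v h true, WBcolor_card_true]
    · rw [hNcard, nbr_card_aux G c v h false, WBcolor_card_false]
  have hlongN : ∀ v, c v = false → (N true v).card = 6 := by
    intro v hv
    have h := (hloc v).2 hv
    rw [hNcard, nbr_card_aux G c v h true, WCcolor_card_true]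
  set S : Finset V := Finset.univ.filter (fun v => c v = true) with hS
  set L : Finset V := Finset.univ.filter (fun v => c v = false) with hL
  -- double counting : S.card = L.card
  have hNS : ∀ v, N false v = L.filter (fun w => G.Adj v w) := by
    intro v
    simp only [hN, hL, Finset.filter_filter]
    exact Finset.filter_congr (fun w _ => by tauto)
  have hNL : ∀ w, N true w = S.filter (fun v => G.Adj v w) := by
    intro w
    simp only [hN, hS, Finset.filter_filter]
    refine Finset.filter_congr (fun v _ => ?_)
    rw [G.adj_comm]
    tauto
  have hdouble : ∑ v ∈ S, ∑ w ∈ L, (if G.Adj v w then 1 else 0) =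
      ∑ w ∈ L, ∑ v ∈ S, (if G.Adj v w then 1 else 0) := Finset.sum_comm
  have hlhs : ∑ v ∈ S, ∑ w ∈ L, (if G.Adj v w then 1 else 0) = 6 * S.card := by
    rw [Finset.sum_congr rfl (fun v hv => ?_), Finset.sum_const, smul_eq_mul, mul_comm]
    rw [Finset.sum_boole, ← hNS v]
    have := (hshortN v (by simpa [hS] using hv)).2
    exact_mod_cast this
  have hrhs : ∑ w ∈ L, ∑ v ∈ S, (if G.Adj v w then 1 else 0) = 6 * L.card := by
    rw [Finset.sum_congr rfl (fun w hw => ?_), Finset.sum_const, smul_eq_mul, mul_comm]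
    rw [Finset.sum_boole, ← hNL w]
    exact_mod_cast hlongN w (by simpa [hL] using hw)
  have hSL : S.card = L.card := by
    have : 6 * S.card = 6 * L.card := by rw [← hlhs, ← hrhs, hdouble]
    omega
  -- blocks
  set B : V → Finset V := fun v => insert v (N true v) with hB
  have hBself : ∀ v, v ∈ B v := fun v => Finset.mem_insert_self v _
  have hBmem : ∀ v u, u ∈ B v → u = v ∨ (G.Adj v u ∧ c u = true) := by
    intro v u hu
    rcases Finset.mem_insert.mp hu with h | h
    · exact Or.inl h
    · exact Or.inr (by simpa [hN] using h)
  have hBshort : ∀ v, c v = true → ∀ u ∈ B v, c u = true := by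
    intro v hv u hu
    rcases hBmem v u hu with rfl | ⟨_, h⟩
    · exact hv
    · exact h
  have hBcard : ∀ v, c v = true → (B v).card = 4 := by
    intro v hv
    have hnm : v ∉ N true v := by
      simp [hN, G.irrefl]
    rw [hB]
    rw [Finset.card_insert_of_notMem hnm, (hshortN v hv).1]
  have hBadj : ∀ v, c v = true → ∀ u1 ∈ B v, ∀ u2 ∈ B v, u1 ≠ u2 → G.Adj u1 u2 := by
    intro v hv u1 h1 u2 h2 hne12
    rcases hBmem v u1 h1 with rfl | ⟨ha1, hc1⟩
    · rcases hBmem u1 u2 h2 with rfl | ⟨ha2, _⟩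
      · exact absurd rfl hne12
      · exact ha2
    · rcases hBmem v u2 h2 with rfl | ⟨ha2, hc2⟩
      · exact ha1.symm
      · exact short_nbrs_adj hloc hv ha1 ha2 hc1 hc2 hne12
  have hBmem' : ∀ v, c v = true → ∀ u, u ∈ B v ↔ (u = v ∨ (G.Adj v u ∧ c u = true)) := by
    intro v hv u
    constructor
    · exact hBmem v u
    · rintro (rfl | h)
      · exact hBself u
      · exact Finset.mem_insert_of_mem (by simp [hN, h.1, h.2])
  have hBeq : ∀ v, c v = true → ∀ u ∈ B v, B u = B v := by
    intro v hv u hu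
    have hcu : c u = true := hBshort v hv u hu
    rcases hBmem v u hu with rfl | ⟨hvu, _⟩
    · rfl
    · have hvBu : v ∈ B u := (hBmem' u hcu v).mpr (Or.inr ⟨hvu.symm, hv⟩)
      apply Finset.Subset.antisymm
      · intro x hx
        by_cases hxv : x = v
        · subst hxv; exact hBself x
        by_cases hxu : x = u
        · subst hxu; exact hu
        · have hcx : c x = true := hBshort u hcu x hx
          have : G.Adj v x := G.adj_symm (hBadj u hcu x hx v hvBu (fun h => hxv h))
          exact (hBmem' v hv x).mpr (Or.inr ⟨this, hcx⟩)
      · intro x hx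
        by_cases hxu : x = u
        · subst hxu; exact hBself x
        · have hcx : c x = true := hBshort v hv x hx
          have : G.Adj u x := G.adj_symm (hBadj v hv x hx u hu (fun h => hxu h))
          exact (hBmem' u hcu x).mpr (Or.inr ⟨this, hcx⟩)
  -- partition of S into blocks
  set T : Finset (Finset V) := S.image B with hT
  have hfib : S.card = ∑ b ∈ T, (S.filter (fun a => B a = b)).card :=
    Finset.card_eq_sum_card_fiberwise (fun x hx => Finset.mem_image_of_mem B hx)
  have hfib4 : ∀ b ∈ T, (S.filter (fun a => B a = b)).card = 4 := by
    intro b hb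
    obtain ⟨v, hvS, hvb⟩ := Finset.mem_image.mp hb
    have hv : c v = true := by simpa [hS] using hvS
    have : S.filter (fun a => B a = b) = b := by
      ext u
      simp only [Finset.mem_filter]
      constructor
      · rintro ⟨_, hBu⟩
        rw [← hBu]; exact hBself u
      · intro hu
        rw [← hvb] at hu
        have hcu : c u = true := hBshort v hv u hu
        exact ⟨by simp [hS, hcu], by rw [hBeq v hv u hu, hvb]⟩
    rw [this, ← hvb]
    exact hBcard v hv
  have hScard : S.card = 4 * T.card := by
    rw [hfib, Finset.sum_congr rfl hfib4, Finset.sum_const, smul_eq_mul, mul_comm]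
  -- existence of a long vertex
  obtain ⟨v0⟩ := hne
  have hlongex : ∃ w, c w = false := by
    by_cases h0 : c v0 = false
    · exact ⟨v0, h0⟩
    · have hv0 : c v0 = true := by
        cases h : c v0
        · exact absurd h h0
        · rfl
      have h6 : (N false v0).card = 6 := (hshortN v0 hv0).2
      have : (N false v0).Nonempty := Finset.card_pos.mp (by omega)
      obtain ⟨w, hw⟩ := this
      exact ⟨w, (by simpa [hN] using hw : G.Adj v0 w ∧ c w = false).2⟩
  obtain ⟨w, hw⟩ := hlongex
  -- the 6 short neighbors of w hit each block at most twice
  have hw6 : (N true w).card = 6 := hlongN w hw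
  have hwfib : (N true w).card = ∑ b ∈ T, ((N true w).filter (fun a => B a = b)).card := by
    refine Finset.card_eq_sum_card_fiberwise (fun x hx => ?_)
    have hx' : G.Adj w x ∧ c x = true := by simpa [hN] using hx
    exact Finset.mem_image_of_mem B (by simp [hS, hx'.2])
  have hwfib2 : ∀ b ∈ T, ((N true w).filter (fun a => B a = b)).card ≤ 2 := by
    intro b hb
    by_contra hgt
    have h2 : 2 < (Finset.filter (fun a => B a = b) (N true w)).card := by omega
    obtain ⟨x, y, z, hx, hy, hz, hxy, hxz, hyz⟩ := Finset.two_lt_card_iff.mp h2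
    simp only [Finset.mem_filter, hN, Finset.mem_univ, true_and] at hx hy hz
    obtain ⟨⟨hax, hcx⟩, hBx⟩ := hx
    obtain ⟨⟨hay, hcy⟩, hBy⟩ := hy
    obtain ⟨⟨haz, hcz⟩, hBz⟩ := hz
    have hyBx : y ∈ B x := by rw [hBx, ← hBy]; exact hBself y
    have hzBx : z ∈ B x := by rw [hBx, ← hBz]; exact hBself z
    have haxy : G.Adj x y := hBadj x hcx x (hBself x) y hyBx hxy
    have haxz : G.Adj x z := hBadj x hcx x (hBself x) z hzBx hxz
    have hayz : G.Adj y z := hBadj x hcx y hyBx z hzBx hyz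
    exact long_nbrs_tf hloc hw hax hay haz hcx hcy hcz haxy haxz hayz
  have hT3 : 3 ≤ T.card := by
    have : (6 : ℕ) ≤ 2 * T.card := by
      calc (6 : ℕ) = (N true w).card := hw6.symm
        _ = ∑ b ∈ T, ((N true w).filter (fun a => B a = b)).card := hwfib
        _ ≤ ∑ _b ∈ T, 2 := Finset.sum_le_sum hwfib2
        _ = 2 * T.card := by rw [Finset.sum_const, smul_eq_mul, mul_comm]
    omega
  -- conclusion
  have hcardT : Nat.card {v : V // c v = true} = S.card := by
    rw [Nat.card_eq_fintype_card, Fintype.card_subtype]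
  have hcardF : Nat.card {v : V // c v = false} = L.card := by
    rw [Nat.card_eq_fintype_card, Fintype.card_subtype]
  have hcardV : Nat.card V = S.card + L.card := by
    rw [Nat.card_eq_fintype_card, ← Finset.card_univ,
      ← Finset.card_filter_add_card_filter_not (p := fun v => c v = true)]
    have hfe : Finset.filter (fun a => ¬ c a = true) Finset.univ = L := by
      ext v
      simp [hL]
    rw [hfe]
  refine ⟨by rw [hcardT, hcardF, hSL], ?_, ?_⟩
  · rw [hcardV, ← hSL, hScard]
    exact ⟨T.card, by ring⟩
  · rw [hcardV, ← hSL, hScard]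
    omega
end

section
/- Let Γ be a bichromatic graph that is locally like W(F4), and let x and y be two vertices of Γ of the same type at distance 2 in Γ. Then every common neighbor of x and y is of the opposite type, any two distinct common neighbors of x and y are non-adjacent, and the number of common neighbors of x and y is 1, 2, or 3. -/
lemma B3_diag_adj : ∀ p q : Fin 3 × Fin 3, p.1 = p.2 → q.1 = q.2 → p ≠ q → (WB 3).Adj p q := by
  simp only [WB_adj_iff]; decide

lemma B3_common : ∀ d p q : Fin 3 × Fin 3, d.1 = d.2 → p.1 ≠ p.2 → q.1 ≠ q.2 →
    (WB 3).Adj d p → (WB 3).Adj d q → p ≠ q → (WB 3).Adj p q := by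
  simp only [WB_adj_iff]; decide

lemma B3_swap : ∀ p q : Fin 3 × Fin 3, p.1 ≠ p.2 → q.1 ≠ q.2 → p ≠ q →
    ({p.1, p.2} : Finset (Fin 3)) = {q.1, q.2} → (WB 3).Adj p q := by
  simp only [WB_adj_iff]; decide

lemma bool_diag {A : Prop} [Decidable A] {b t : Bool} (h : (decide A == b) = t) :
    A ↔ b = t := by
  cases b <;> cases t <;> simp_all

lemma offdiag_bound (T : Set (Fin 3 × Fin 3)) (hoff : ∀ p ∈ T, p.1 ≠ p.2)
    (hind : ∀ p ∈ T, ∀ q ∈ T, p ≠ q → ¬(WB 3).Adj p q) : T.ncard ≤ 3 := by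
  set f : Fin 3 × Fin 3 → Finset (Fin 3) := fun p => ({p.1, p.2} : Finset (Fin 3)) with hf
  have hinj : Set.InjOn f T := by
    intro p hp q hq hpq
    by_contra hne
    exact hind p hp q hq hne (B3_swap p q (hoff p hp) (hoff q hq) hne hpq)
  have h1 : (f '' T).ncard = T.ncard := Set.ncard_image_of_injOn hinj
  have hsub : f '' T ⊆ {t : Finset (Fin 3) | t.card = 2} := by
    rintro _ ⟨p, hp, rfl⟩
    simpa [hf] using Finset.card_pair (hoff p hp)
  have h2 : (f '' T).ncard ≤ ({t : Finset (Fin 3) | t.card = 2} : Set _).ncard :=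
    Set.ncard_le_ncard hsub (Set.toFinite _)
  have h3 : ({t : Finset (Fin 3) | t.card = 2} : Set _).ncard = 3 := by
    rw [Set.ncard_eq_toFinset_card']
    decide
  omega

section Core
variable {V : Type} (G : SimpleGraph V) (c : V → Bool)

lemma induce_adj' {s : Set V} (a b : s) (h : G.Adj ↑a ↑b) : (G.induce s).Adj a b := by
  simpa using h

lemma core_opp {x y z : V}
    (hxz : x ∈ G.neighborSet z) (hyz : y ∈ G.neighborSet z)
    (hxy : ¬ G.Adj x y) (hne : x ≠ y)
    (e : G.induce (G.neighborSet z) ≃g WB 3)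
    (hcol : ∀ v : G.neighborSet z, (decide ((e v).1 = (e v).2) == c z) = c v.1)
    (hcx : c x = c z) (hcy : c y = c z) : False := by
  have h1 := hcol ⟨x, hxz⟩; rw [hcx] at h1
  have h2 := hcol ⟨y, hyz⟩; rw [hcy] at h2
  have hdx := (bool_diag h1).mpr rfl
  have hdy := (bool_diag h2).mpr rfl
  have hne' : e ⟨x, hxz⟩ ≠ e ⟨y, hyz⟩ := by
    intro hh
    exact hne (congrArg Subtype.val (e.toEquiv.injective hh))
  have hadj := B3_diag_adj _ _ hdx hdy hne'
  rw [e.map_rel_iff] at hadj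
  exact hxy (by simpa using hadj)

lemma core_nadj {x y z z' : V}
    (hxz : x ∈ G.neighborSet z) (hyz : y ∈ G.neighborSet z)
    (hz'z : z' ∈ G.neighborSet z)
    (hxz' : G.Adj x z') (hyz' : G.Adj y z')
    (hxy : ¬ G.Adj x y) (hne : x ≠ y)
    (e : G.induce (G.neighborSet z) ≃g WB 3)
    (hcol : ∀ v : G.neighborSet z, (decide ((e v).1 = (e v).2) == c z) = c v.1)
    (hcx : c x ≠ c z) (hcy : c y ≠ c z) (hcz' : c z' = c z) : False := by
  have h1 := hcol ⟨x, hxz⟩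
  have h2 := hcol ⟨y, hyz⟩
  have h3 := hcol ⟨z', hz'z⟩; rw [hcz'] at h3
  have hdz' := (bool_diag h3).mpr rfl
  have hox : (e ⟨x, hxz⟩).1 ≠ (e ⟨x, hxz⟩).2 := fun hh =>
    hcx (((bool_diag h1).mp hh).symm)
  have hoy : (e ⟨y, hyz⟩).1 ≠ (e ⟨y, hyz⟩).2 := fun hh =>
    hcy (((bool_diag h2).mp hh).symm)
  have hax : (WB 3).Adj (e ⟨z', hz'z⟩) (e ⟨x, hxz⟩) :=
    e.map_rel_iff.mpr (induce_adj' G _ _ hxz'.symm)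
  have hay : (WB 3).Adj (e ⟨z', hz'z⟩) (e ⟨y, hyz⟩) :=
    e.map_rel_iff.mpr (induce_adj' G _ _ hyz'.symm)
  have hne' : e ⟨x, hxz⟩ ≠ e ⟨y, hyz⟩ := by
    intro hh
    exact hne (congrArg Subtype.val (e.toEquiv.injective hh))
  have hadj := B3_common _ _ _ hdz' hox hoy hax hay hne'
  rw [e.map_rel_iff] at hadj
  exact hxy (by simpa using hadj)

lemma core_card {x y : V}
    (e : G.induce (G.neighborSet x) ≃g WB 3)
    (hcol : ∀ v : G.neighborSet x, (decide ((e v).1 = (e v).2) == c x) = c v.1)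
    (hopp : ∀ z ∈ G.commonNeighbors x y, c z ≠ c x)
    (hind : ∀ z ∈ G.commonNeighbors x y, ∀ z' ∈ G.commonNeighbors x y,
      z ≠ z' → ¬ G.Adj z z')
    (hex : (G.commonNeighbors x y).Nonempty) :
    (G.commonNeighbors x y).ncard ∈ ({1, 2, 3} : Set ℕ) := by
  have hsub : G.commonNeighbors x y ⊆ G.neighborSet x := fun z hz =>
    (SimpleGraph.mem_commonNeighbors G).mp hz |>.1
  set S : Set ↥(G.neighborSet x) := Subtype.val ⁻¹' (G.commonNeighbors x y) with hS
  have himg : Subtype.val '' S = G.commonNeighbors x y := by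
    rw [hS, Set.image_preimage_eq_inter_range, Subtype.range_coe]
    exact Set.inter_eq_left.mpr hsub
  set T : Set (Fin 3 × Fin 3) := (⇑e) '' S with hT
  have hc1 : (G.commonNeighbors x y).ncard = S.ncard := by
    rw [← himg]; exact Set.ncard_image_of_injective S Subtype.val_injective
  have hc2 : T.ncard = S.ncard := Set.ncard_image_of_injective S e.toEquiv.injective
  have hToff : ∀ p ∈ T, p.1 ≠ p.2 := by
    rintro _ ⟨v, hv, rfl⟩ hh
    have := (bool_diag (hcol v)).mp hh
    exact hopp v.1 hv this.symm
  have hTind : ∀ p ∈ T, ∀ q ∈ T, p ≠ q → ¬(WB 3).Adj p q := by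
    rintro _ ⟨v, hv, rfl⟩ _ ⟨w, hw, rfl⟩ hpq hadj
    rw [e.map_rel_iff] at hadj
    have hvw : (v : V) ≠ (w : V) := by
      intro hh; exact hpq (congrArg e (Subtype.ext hh))
    exact hind v.1 hv w.1 hw hvw (by simpa using hadj)
  have hb := offdiag_bound T hToff hTind
  have hTne : T.Nonempty := by
    obtain ⟨z, hz⟩ := hex
    exact ⟨e ⟨z, hsub hz⟩, ⟨z, hsub hz⟩, hz, rfl⟩
  have hpos : 0 < T.ncard := (Set.ncard_pos (Set.toFinite T)).mpr hTne
  rw [hc1, ← hc2]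
  simp only [Set.mem_insert_iff, Set.mem_singleton_iff]
  omega

end Core


theorem common_neighbors_same_type_distance_two {V : Type} (G : SimpleGraph V) (c : V → Bool)
    (hloc : LocallyLikeWF4 G c) (x y : V)
    (htype : c x = c y) (hdist : G.dist x y = 2) :
    (∀ z ∈ G.commonNeighbors x y, c z ≠ c x) ∧
    (∀ z ∈ G.commonNeighbors x y, ∀ z' ∈ G.commonNeighbors x y, z ≠ z' → ¬ G.Adj z z') ∧
    (G.commonNeighbors x y).ncard ∈ ({1, 2, 3} : Set ℕ) := by
  have hxy : ¬ G.Adj x y := by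
    intro ha
    have := (SimpleGraph.dist_eq_one_iff_adj (G := G)).mpr ha
    omega
  have hne : x ≠ y := by
    intro h; rw [h, SimpleGraph.dist_self] at hdist; omega
  have hex : (G.commonNeighbors x y).Nonempty := by
    have hr : G.Reachable x y := by
      by_contra hc
      rw [SimpleGraph.dist_eq_zero_of_not_reachable hc] at hdist; omega
    obtain ⟨w, hw⟩ := hr.exists_walk_length_eq_dist
    rw [hdist] at hw
    match w, hw with
    | SimpleGraph.Walk.cons h1 (SimpleGraph.Walk.cons h2 SimpleGraph.Walk.nil), _ =>
      exact ⟨_, h1, h2.symm⟩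
  -- obtain the correctly-normalized coloring for the local iso at any vertex
  have hiso : ∀ z : V, ∃ e : G.induce (G.neighborSet z) ≃g WB 3,
      ∀ v : G.neighborSet z, (decide ((e v).1 = (e v).2) == c z) = c v.1 := by
    intro z
    cases hc : c z with
    | true =>
      obtain ⟨e, he⟩ := (hloc z).1 hc
      exact ⟨e, fun v => by have := he v; simp only [WBcolor] at this; simp [hc, this]⟩
    | false =>
      obtain ⟨e, he⟩ := (hloc z).2 hc
      exact ⟨e, fun v => by have := he v; simp only [WCcolor, WBcolor] at this; simp [hc, this]⟩
  have part1 : ∀ z ∈ G.commonNeighbors x y, c z ≠ c x := by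
    intro z hz hcz
    rw [SimpleGraph.mem_commonNeighbors] at hz
    obtain ⟨e, hcol⟩ := hiso z
    exact core_opp G c hz.1.symm hz.2.symm hxy hne e hcol hcz.symm
      (htype ▸ hcz.symm)
  have part2 : ∀ z ∈ G.commonNeighbors x y, ∀ z' ∈ G.commonNeighbors x y,
      z ≠ z' → ¬ G.Adj z z' := by
    intro z hz z' hz' hnzz' hadj
    have hz2 := hz; have hz'2 := hz'
    rw [SimpleGraph.mem_commonNeighbors] at hz2 hz'2
    obtain ⟨e, hcol⟩ := hiso z
    have hcz := part1 z hz
    have hcz' := part1 z' hz'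
    have hczz' : c z' = c z := by
      revert hcz hcz'; cases c z' <;> cases c z <;> cases c x <;> simp_all
    exact core_nadj G c hz2.1.symm hz2.2.symm hadj hz'2.1 hz'2.2 hxy hne e hcol
      (fun h => hcz h.symm) (fun h => hcz' ((hczz'.trans h.symm).trans htype.symm)) hczz'
  obtain ⟨e, hcol⟩ := hiso x
  exact ⟨part1, part2, core_card G c e hcol part1 part2 hex⟩
end
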